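/- Let f be a Fréchet differentiable pseudoconvex function on an open convex set S in a real Banach space E. Then for all x, y in S with f(y) ≤ f(x), it holds that ⟨∇f(x), y − x⟩ ≤ 0. -/

import Mathlib

def Pseudoconvex {E : Type*} [NormedAddCommGroup E] [NormedSpace ℝ E]
    (S : Set E) (f : E → ℝ) (f' : E → E →L[ℝ] ℝ) : Prop :=
  ∀ x ∈ S, ∀ y ∈ S, f y < f x → f' x (y - x) < 0

theorem stmt_4 {E : Type*} [NormedAddCommGroup E] [NormedSpace ℝ E] [CompleteSpace E]
    {S : Set E} (hSo : IsOpen S) (hSc : Convex ℝ S)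
    (f : E → ℝ) (f' : E → E →L[ℝ] ℝ)
    (hdiff : ∀ x ∈ S, HasFDerivAt f (f' x) x)
    (hpc : Pseudoconvex S f f') :
    ∀ x ∈ S, ∀ y ∈ S, f y ≤ f x → f' x (y - x) ≤ 0 := by
  intro x hx y hy hle
  by_contra h
  push_neg at h
  set v := y - x with hv
  have hgd : HasDerivAt (fun t : ℝ => f (x + t • v)) (f' x v) 0 := by
    have h1 : HasDerivAt (fun t : ℝ => x + t • v) v 0 := by
      simpa using ((hasDerivAt_id (0 : ℝ)).smul_const v).const_add x
    have hx' : HasFDerivAt f (f' x) (x + (0:ℝ) • v) := by simpa using hdiff x hx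
    have h2 := hx'.comp_hasDerivAt 0 h1
    exact h2
  have hslope := hasDerivAt_iff_tendsto_slope.mp hgd
  have hslope' : Filter.Tendsto (slope (fun t : ℝ => f (x + t • v)) 0)
      (nhdsWithin 0 (Set.Ioi 0)) (nhds (f' x v)) :=
    hslope.mono_left (nhdsWithin_mono _ (fun t ht => ne_of_gt ht))
  have hev1 : ∀ᶠ t in nhdsWithin 0 (Set.Ioi 0),
      0 < slope (fun t : ℝ => f (x + t • v)) 0 t :=
    hslope'.eventually (eventually_gt_nhds h)
  have hcont : Filter.Tendsto (fun t : ℝ => x + t • v) (nhdsWithin 0 (Set.Ioi 0)) (nhds x) := by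
    have : Continuous (fun t : ℝ => x + t • v) := by continuity
    have := this.tendsto 0
    simp only [zero_smul, add_zero] at this
    exact this.mono_left nhdsWithin_le_nhds
  have hev2 : ∀ᶠ t : ℝ in nhdsWithin 0 (Set.Ioi 0), x + t • v ∈ S :=
    hcont.eventually (hSo.eventually_mem hx)
  have hev3 : ∀ᶠ t in nhdsWithin 0 (Set.Ioi 0), (t : ℝ) < 1 :=
    Filter.Eventually.filter_mono nhdsWithin_le_nhds (eventually_lt_nhds one_pos)
  have hev4 : ∀ᶠ t in nhdsWithin 0 (Set.Ioi 0), (0 : ℝ) < t :=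
    eventually_mem_nhdsWithin
  obtain ⟨t, hs, hmem, ht1, ht0⟩ := (hev1.and (hev2.and (hev3.and hev4))).exists
  set z := x + t • v with hz
  have hfz : f x < f z := by
    have : 0 < (f z - f x) / t := by
      simpa [slope_def_field, hz] using hs
    have := mul_pos this ht0
    rw [div_mul_cancel₀ _ (ne_of_gt ht0)] at this
    linarith
  have h1 : f' z (x - z) < 0 := hpc z hmem x hx hfz
  have h2 : f' z (y - z) < 0 := hpc z hmem y hy (lt_of_le_of_lt hle hfz)
  have e1 : x - z = (-t) • v := by rw [hz]; module
  have e2 : y - z = (1 - t) • v := by rw [hz, hv]; module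
  rw [e1, map_smul] at h1
  rw [e2, map_smul] at h2
  have p1 : 0 < f' z v := by
    have := h1
    simp only [smul_eq_mul, neg_mul] at this
    nlinarith
  have p2 : f' z v < 0 := by
    simp only [smul_eq_mul] at h2
    nlinarith
  linarith
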